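/- Holomorphic implicit function theorem: Let U ⊂ ℂ^(m+1) be open, f : U → ℂ holomorphic, and p = (w, z) ∈ U with w ∈ ℂ^m, z ∈ ℂ, f(p) = 0, and ∂f/∂z(p) ≠ 0. Then there exist a neighborhood V ⊂ ℂ^m of w, a holomorphic function g : V → ℂ, and a neighborhood W ⊆ U of p such that the zero set of f in W equals {(w̃, z̃) ∈ W : z̃ = g(w̃)}. -/

import Mathlib

/-- Holomorphic implicit function theorem: let `U ⊂ ℂ^m × ℂ` be open,
`f : U → ℂ` holomorphic, and `p = (w, z) ∈ U` with `f(p) = 0` and `∂f/∂z (p) ≠ 0`.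
Then there are a neighborhood `V` of `w`, a holomorphic `g : V → ℂ`, and a neighborhood
`W ⊆ U` of `p` such that the zero set of `f` in `W` is exactly the graph
`{(w̃, z̃) ∈ W : z̃ = g(w̃)}`. -/
theorem holomorphic_implicit_function (m : ℕ)
    (U : Set ((Fin m → ℂ) × ℂ)) (hU : IsOpen U)
    (f : (Fin m → ℂ) × ℂ → ℂ) (hf : AnalyticOnNhd ℂ f U)
    (w : Fin m → ℂ) (z : ℂ) (hp : (w, z) ∈ U)
    (hf0 : f (w, z) = 0)
    (hfz : deriv (fun z' : ℂ => f (w, z')) z ≠ 0) :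
    ∃ V ∈ nhds w, ∃ g : (Fin m → ℂ) → ℂ, AnalyticOnNhd ℂ g V ∧
      ∃ W ∈ nhds ((w, z) : (Fin m → ℂ) × ℂ), W ⊆ U ∧
        {q ∈ W | f q = 0} = {q ∈ W | q.1 ∈ V ∧ q.2 = g q.1} := by
  classical
  set p₀ : (Fin m → ℂ) × ℂ := (w, z) with hp₀
  -- the map F
  set F : (Fin m → ℂ) × ℂ → (Fin m → ℂ) × ℂ := fun q => (q.1, f q) with hF
  have hfa : AnalyticAt ℂ f p₀ := hf p₀ hp
  have hFa : AnalyticAt ℂ F p₀ := analyticAt_fst.prod hfa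
  -- derivative data
  set df : (Fin m → ℂ) × ℂ →L[ℂ] ℂ := fderiv ℂ f p₀ with hdf_def
  have hdf : HasFDerivAt f df p₀ := hfa.differentiableAt.hasFDerivAt
  set B : (Fin m → ℂ) × ℂ →L[ℂ] (Fin m → ℂ) × ℂ :=
    (ContinuousLinearMap.fst ℂ (Fin m → ℂ) ℂ).prod df with hB_def
  have hFB : HasFDerivAt F B p₀ := HasFDerivAt.prodMk hasFDerivAt_fst hdf
  -- ∂f/∂z (p₀) = df (0, 1)
  have hderiv : deriv (fun z' : ℂ => f (w, z')) z = df ((0 : Fin m → ℂ), (1 : ℂ)) := by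
    have hj : HasDerivAt (fun z' : ℂ => ((w, z') : (Fin m → ℂ) × ℂ))
        ((0 : Fin m → ℂ), (1 : ℂ)) z := by
      have h1 : HasDerivAt (fun z' : ℂ => z' • (((0 : Fin m → ℂ), (1 : ℂ)) : (Fin m → ℂ) × ℂ))
          ((1 : ℂ) • (((0 : Fin m → ℂ), (1 : ℂ)) : (Fin m → ℂ) × ℂ)) z :=
        (hasDerivAt_id z).smul_const _
      rw [one_smul] at h1
      have h2 := h1.const_add (((w, 0) : (Fin m → ℂ) × ℂ))
      exact h2.congr_of_eventuallyEq (Filter.Eventually.of_forall fun z' => by simp [Prod.ext_iff])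
    have := hdf.comp_hasDerivAt z hj
    exact this.deriv
  have hc : df ((0 : Fin m → ℂ), (1 : ℂ)) ≠ 0 := by rwa [hderiv] at hfz
  -- B is a continuous linear equivalence
  have hBinj : Function.Injective B := by
    intro a b hab
    have hpair : (a.1, df a) = (b.1, df b) := hab
    rw [Prod.mk.injEq] at hpair
    obtain ⟨h1, h2⟩ := hpair
    have hsub : df (a - b) = 0 := by rw [map_sub, h2, sub_self]
    have hab2 : a - b = (a.2 - b.2) • (((0 : Fin m → ℂ), (1 : ℂ)) : (Fin m → ℂ) × ℂ) := by
      simp [Prod.ext_iff, Prod.sub_def, h1]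
    rw [hab2, map_smul, smul_eq_mul, mul_eq_zero] at hsub
    rcases hsub with h | h
    · have : a.2 = b.2 := by linear_combination h
      exact Prod.ext h1 this
    · exact absurd h hc
  have hBsurj : Function.Surjective B :=
    LinearMap.injective_iff_surjective.mp hBinj
  let eB : ((Fin m → ℂ) × ℂ) ≃ₗ[ℂ] ((Fin m → ℂ) × ℂ) :=
    LinearEquiv.ofBijective (B : ((Fin m → ℂ) × ℂ) →ₗ[ℂ] ((Fin m → ℂ) × ℂ)) ⟨hBinj, hBsurj⟩
  let i : ((Fin m → ℂ) × ℂ) ≃L[ℂ] ((Fin m → ℂ) × ℂ) := eB.toContinuousLinearEquiv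
  have hiB : i.toContinuousLinearMap = B := ContinuousLinearMap.ext fun v => rfl
  -- strict derivative / power series
  obtain ⟨q, hq⟩ := hFa
  have hq1 : continuousMultilinearCurryFin1 ℂ ((Fin m → ℂ) × ℂ) ((Fin m → ℂ) × ℂ) (q 1) = B := by
    rw [← hq.fderiv_eq]; exact hFB.fderiv
  have hstrict : HasStrictFDerivAt F (i : ((Fin m → ℂ) × ℂ) →L[ℂ] ((Fin m → ℂ) × ℂ)) p₀ := by
    show HasStrictFDerivAt F i.toContinuousLinearMap p₀
    rw [hiB, ← hq1]; exact hq.hasStrictFDerivAt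
  set Φ := HasStrictFDerivAt.toOpenPartialHomeomorph F hstrict with hΦ
  have hΦcoe : ⇑Φ = F := HasStrictFDerivAt.toOpenPartialHomeomorph_coe hstrict
  have hΦsrc : p₀ ∈ Φ.source := HasStrictFDerivAt.mem_toOpenPartialHomeomorph_source hstrict
  have hqΦ : HasFPowerSeriesAt (⇑Φ) q p₀ := by rw [hΦcoe]; exact hq
  have hq1' : q 1 = (continuousMultilinearCurryFin1 ℂ ((Fin m → ℂ) × ℂ)
      ((Fin m → ℂ) × ℂ)).symm (i : ((Fin m → ℂ) × ℂ) →L[ℂ] ((Fin m → ℂ) × ℂ)) := by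
    have h : (i : ((Fin m → ℂ) × ℂ) →L[ℂ] ((Fin m → ℂ) × ℂ)) = B :=
      ContinuousLinearMap.ext fun v => rfl
    rw [h, ← hq1]; simp
  have hsymm : HasFPowerSeriesAt (⇑Φ.symm) (q.leftInv i p₀) (Φ p₀) :=
    Φ.hasFPowerSeriesAt_symm hΦsrc hqΦ hq1'
  have hFp₀ : Φ p₀ = ((w, (0:ℂ))) := by
    rw [hΦcoe]; simp [hF, hp₀, hf0]; exact hf0
  rw [hFp₀] at hsymm
  have hsymman : AnalyticAt ℂ (⇑Φ.symm) ((w, (0:ℂ))) := ⟨_, hsymm⟩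
  -- define g
  set g : (Fin m → ℂ) → ℂ := fun v => (Φ.symm ((v, (0:ℂ)))).2 with hg
  have hgw : AnalyticAt ℂ g w := by
    have hinl : AnalyticAt ℂ (fun v : Fin m → ℂ => ((v, (0:ℂ)))) w :=
      analyticAt_id.prod analyticAt_const
    have h1 : AnalyticAt ℂ (⇑Φ.symm ∘ fun v : Fin m → ℂ => ((v, (0:ℂ)))) w :=
      hsymman.comp_of_eq hinl rfl
    have h2 : AnalyticAt ℂ (Prod.snd ∘ ⇑Φ.symm ∘ fun v : Fin m → ℂ => ((v, (0:ℂ)))) w :=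
      analyticAt_snd.comp h1
    exact h2
  -- choose V open
  obtain ⟨V, hVsub, hVopen, hVw⟩ := eventually_nhds_iff.mp hgw.eventually_analyticAt
  -- choose W
  set W : Set ((Fin m → ℂ) × ℂ) := U ∩ Φ.source ∩
      ((fun q : (Fin m → ℂ) × ℂ => ((q.1, (0:ℂ)))) ⁻¹' Φ.target) ∩ (Prod.fst ⁻¹' V) with hW
  have hWopen : IsOpen W := by
    refine (((hU.inter Φ.open_source).inter ?_).inter (hVopen.preimage continuous_fst))
    exact Φ.open_target.preimage (by fun_prop)
  have hΦtgt : ((w, (0:ℂ))) ∈ Φ.target := by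
    rw [← hFp₀]; exact Φ.map_source hΦsrc
  have hpW : p₀ ∈ W := ⟨⟨⟨hp, hΦsrc⟩, hΦtgt⟩, hVw⟩
  refine ⟨V, hVopen.mem_nhds hVw, g, fun v hv => hVsub v hv, W, hWopen.mem_nhds hpW,
    fun q hq => hq.1.1.1, ?_⟩
  ext q
  simp only [Set.mem_setOf_eq]
  constructor
  · rintro ⟨hqW, hq0⟩
    refine ⟨hqW, hqW.2, ?_⟩
    have hΦq : Φ q = ((q.1, (0:ℂ))) := by rw [hΦcoe]; simp [hF, hq0]
    have := Φ.left_inv hqW.1.1.2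
    rw [hΦq] at this
    exact (congrArg Prod.snd this).symm
  · rintro ⟨hqW, -, hq2⟩
    refine ⟨hqW, ?_⟩
    set r : (Fin m → ℂ) × ℂ := Φ.symm ((q.1, (0:ℂ))) with hr
    have htgt : ((q.1, (0:ℂ))) ∈ Φ.target := hqW.1.2
    have hΦr : Φ r = ((q.1, (0:ℂ))) := Φ.right_inv htgt
    rw [hΦcoe] at hΦr
    have hpair : (r.1, f r) = (q.1, (0:ℂ)) := hΦr
    rw [Prod.mk.injEq] at hpair
    obtain ⟨hr1, hfr⟩ := hpair
    have hqr : q = r := by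
      exact Prod.ext hr1.symm hq2
    rw [hqr]; exact hfr
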